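/- Fix $N \ge 2$, $0 < K < 1$, and constants $M, A \ge 0$. Define $S(N, A) = \min \sum_{n=0}^{N-1} \eta_n^2 A_n^2$ over all $(\eta_0,\dots,\eta_{N-1}) \in [0,1]^N$ with $\eta_{N-1} = 1$, where $A_0 = A$ and $A_{n+1} = K(1-\eta_n)A_n + M$. Then $S(N, A) = \frac{1-K^2}{1-K^{2N}}\left(K^{N-1}A + M\frac{1-K^{N-1}}{1-K}\right)^2$ if $A \ge M\frac{K^{N-1}(1+K)}{1+K^{N-1}}$, and $S(N, A) = A^2 + M^2\frac{(1-K^{N-1})^2(1-K^2)}{(1-K^{2N-2})(1-K)^2}$ otherwise; moreover $S(N,A) \le 2\frac{1-K^2}{1-K^{2N}}\left(K^{N-1}A + M\frac{1-K^{N-1}}{1-K}\right)^2$ in all cases (with $S(1,A) = A^2$). -/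

import Mathlib

noncomputable section

/-- The sequence `A_n` of the shift-optimization problem. -/
def shiftA (K M A : ℝ) (η : ℕ → ℝ) : ℕ → ℝ
  | 0 => A
  | (n + 1) => K * (1 - η n) * shiftA K M A η n + M

/-- The objective of the shift-optimization problem. -/
def shiftObj (K M A : ℝ) (N : ℕ) (η : ℕ → ℝ) : ℝ :=
  ∑ n ∈ Finset.range N, (η n) ^ 2 * (shiftA K M A η n) ^ 2

/-- The value `S(N, A)` of the shift-optimization problem. -/
def Sval (K M A : ℝ) (N : ℕ) : ℝ :=
  sInf {s : ℝ | ∃ η : ℕ → ℝ, (∀ n < N, 0 ≤ η n ∧ η n ≤ 1) ∧ η (N - 1) = 1 ∧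
    s = shiftObj K M A N η}

end

namespace ShiftProof
open Finset

noncomputable def aseq (K M A : ℝ) (x : ℕ → ℝ) : ℕ → ℝ
  | 0 => A
  | n+1 => K * (aseq K M A x n - x n) + M

lemma shiftA_eq_aseq (K M A : ℝ) (η : ℕ → ℝ) (n : ℕ) :
    shiftA K M A η n = aseq K M A (fun i => η i * shiftA K M A η i) n := by
  induction n with
  | zero => rfl
  | succ n ih => simp only [shiftA, aseq, ← ih]; ring

lemma aseq_eq (K M A : ℝ) (x : ℕ → ℝ) (n : ℕ) :
    aseq K M A x n = K^n * A + M * ∑ i ∈ Finset.range n, K^i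
      - ∑ i ∈ Finset.range n, K^(n-i) * x i := by
  induction n with
  | zero => simp [aseq]
  | succ n ih =>
    rw [show aseq K M A x (n+1) = K * (aseq K M A x n - x n) + M from rfl, ih,
      Finset.sum_range_succ (f := fun i => K^(n+1-i) * x i)]
    have hg : ∑ i ∈ Finset.range (n+1), K^i = 1 + K * ∑ i ∈ Finset.range n, K^i := by
      rw [Finset.sum_range_succ', Finset.mul_sum]
      simp only [pow_succ, pow_zero]
      rw [add_comm]
      congr 1
      exact Finset.sum_congr rfl fun i _ => by ring
    have h1 : ∑ i ∈ Finset.range n, K^(n+1-i) * x i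
        = K * ∑ i ∈ Finset.range n, K^(n-i) * x i := by
      rw [Finset.mul_sum]
      refine Finset.sum_congr rfl fun i hi => ?_
      rw [Finset.mem_range] at hi
      rw [show n+1-i = (n-i)+1 by omega, pow_succ]
      ring
    rw [h1, hg, show n+1-n = 1 by omega, pow_succ, pow_one]
    ring

lemma sum_w_x (K M A : ℝ) (η : ℕ → ℝ) (m : ℕ) (hlast : η m = 1) :
    ∑ j ∈ Finset.range (m+1), K^(m-j) * (η j * shiftA K M A η j)
      = K^m * A + M * ∑ i ∈ Finset.range m, K^i := by
  rw [Finset.sum_range_succ]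
  have h := aseq_eq K M A (fun i => η i * shiftA K M A η i) m
  rw [← shiftA_eq_aseq] at h
  rw [Nat.sub_self, pow_zero, one_mul, hlast, one_mul, h]
  ring

lemma obj_lower (K M A : ℝ) (m : ℕ) (η : ℕ → ℝ) (hlast : η m = 1) :
    (K^m*A + M * ∑ i ∈ Finset.range m, K^i)^2
      ≤ (∑ i ∈ Finset.range (m+1), (K^2)^i) * shiftObj K M A (m+1) η := by
  have hcs := Finset.sum_mul_sq_le_sq_mul_sq (Finset.range (m+1))
    (fun j => K^(m-j)) (fun j => η j * shiftA K M A η j)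
  rw [sum_w_x K M A η m hlast] at hcs
  have h1 : ∑ j ∈ Finset.range (m+1), (K^(m-j))^2 = ∑ i ∈ Finset.range (m+1), (K^2)^i := by
    rw [← Finset.sum_range_reflect (fun i => (K^2)^i) (m+1)]
    refine Finset.sum_congr rfl fun j hj => ?_
    have hj : m + 1 - 1 - j = m - j := by omega
    rw [hj, ← pow_mul, ← pow_mul, Nat.mul_comm]
  have h2 : ∑ j ∈ Finset.range (m+1), (η j * shiftA K M A η j)^2
      = shiftObj K M A (m+1) η := by
    unfold shiftObj
    exact Finset.sum_congr rfl fun j _ => by ring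
  rw [h1, h2] at hcs
  exact hcs

lemma shiftA_succ_eq (K M A : ℝ) (η : ℕ → ℝ) (n : ℕ) :
    shiftA K M A η (n+1) = shiftA K M (K*(1-η 0)*A + M) (fun i => η (i+1)) n := by
  induction n with
  | zero => rfl
  | succ n ih => rw [show shiftA K M A η (n+1+1)
      = K * (1 - η (n+1)) * shiftA K M A η (n+1) + M from rfl, ih]; rfl

lemma shiftObj_succ (K M A : ℝ) (η : ℕ → ℝ) (N : ℕ) :
    shiftObj K M A (N+1) η
      = (η 0)^2 * A^2 + shiftObj K M (K*(1-η 0)*A+M) N (fun i => η (i+1)) := by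
  unfold shiftObj
  rw [Finset.sum_range_succ']
  rw [add_comm]
  congr 1
  refine Finset.sum_congr rfl fun i _ => ?_
  simp only
  rw [shiftA_succ_eq]

end ShiftProof

namespace ShiftProof

lemma exists_eta (K M A : ℝ) (N : ℕ) (hN : 1 ≤ N) (x : ℕ → ℝ)
    (hx : ∀ j < N, 0 ≤ x j ∧ x j ≤ aseq K M A x j)
    (hlast : x (N-1) = aseq K M A x (N-1)) :
    ∃ η : ℕ → ℝ, (∀ n < N, 0 ≤ η n ∧ η n ≤ 1) ∧ η (N - 1) = 1 ∧
      shiftObj K M A N η = ∑ j ∈ Finset.range N, (x j)^2 := by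
  set a := aseq K M A x with ha
  set η : ℕ → ℝ := fun n => if a n = 0 then 1 else x n / a n with hη
  have hkey : ∀ n < N, shiftA K M A η n = a n := by
    intro n hn
    induction n with
    | zero => rfl
    | succ n ih =>
      have hn' : n < N := by omega
      have ihn := ih hn'
      have hxa := hx n hn'
      rw [show shiftA K M A η (n+1) = K * (1 - η n) * shiftA K M A η n + M from rfl,
        ihn, show a (n+1) = K * (a n - x n) + M from rfl]
      by_cases h0 : a n = 0
      · have hx0 : x n = 0 := le_antisymm (h0 ▸ hxa.2) hxa.1
        simp [hη, h0, hx0]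
      · have : η n = x n / a n := by simp [hη, h0]
        rw [this]
        field_simp
  refine ⟨η, ?_, ?_, ?_⟩
  · intro n hn
    have hxa := hx n hn
    by_cases h0 : a n = 0
    · simp [hη, h0]
    · have hapos : 0 < a n := lt_of_le_of_ne (le_trans hxa.1 hxa.2) (Ne.symm h0)
      simp only [hη, h0, if_false]
      exact ⟨div_nonneg hxa.1 hapos.le, (div_le_one hapos).2 hxa.2⟩
  · by_cases h0 : a (N-1) = 0
    · simp [hη, h0]
    · simp only [hη, h0, if_false]
      rw [hlast]
      field_simp
  · unfold shiftObj
    refine Finset.sum_congr rfl fun n hn => ?_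
    rw [Finset.mem_range] at hn
    rw [hkey n hn]
    by_cases h0 : a n = 0
    · have hx0 : x n = 0 := le_antisymm (h0 ▸ (hx n hn).2) (hx n hn).1
      simp [hη, h0, hx0]
    · have : η n = x n / a n := by simp [hη, h0]
      rw [this]
      field_simp

lemma geom_closed {K : ℝ} (hK : K ≠ 1) (n : ℕ) :
    ∑ i ∈ Finset.range n, K^i = (1 - K^n) / (1 - K) := by
  rw [geom_sum_eq hK]
  rw [div_eq_div_iff (by intro h; apply hK; linarith [sub_eq_zero.1 h]) (by
    intro h; apply hK; linarith [sub_eq_zero.1 h])]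
  ring

end ShiftProof

namespace ShiftProof

lemma pow_swap (K : ℝ) (j : ℕ) : (K^2)^j = (K^j)^2 := by
  rw [← pow_mul, ← pow_mul, Nat.mul_comm]

lemma sum_w_sq (K : ℝ) (m : ℕ) :
    ∑ j ∈ Finset.range (m+1), (K^(m-j))^2 = ∑ i ∈ Finset.range (m+1), (K^2)^i := by
  rw [← Finset.sum_range_reflect (fun i => (K^2)^i) (m+1)]
  refine Finset.sum_congr rfl fun j hj => ?_
  have hj' : m + 1 - 1 - j = m - j := by omega
  rw [hj', ← pow_mul, ← pow_mul, Nat.mul_comm]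

lemma key_ident (K u v A M : ℝ) (hK : 1 - K ≠ 0) (hK2 : 1 - K^2 ≠ 0)
    (hW : 1 - K^2*u^2*v^2 ≠ 0) :
    (1-K)*(1+u*v)*(1-K^2*u^2*v^2)
      * (u*A + M*((1-u)/(1-K))
          - ((u*v*A + M*((1-u*v)/(1-K)))/((1-K^2*u^2*v^2)/(1-K^2)))
            * (v * ((1-K^2*u^2)/(1-K^2))))
    = u*(1-v^2)*(1-K)*(A*(1+u*v) - M*(u*v)*(1+K))
      + M*(1-v)*(1-u)*(1-K^2*u^2*v^2) := by
  field_simp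
  ring

lemma sq_div_mul (T W : ℝ) (hW : W ≠ 0) : (T/W)^2 * W = T^2/W := by
  field_simp

set_option maxHeartbeats 1000000 in
lemma exists_eta_opt (K M A : ℝ) (hK0 : 0 < K) (hK1 : K < 1) (hM : 0 ≤ M) (hA : 0 ≤ A)
    (m : ℕ) (hth : M * (K^m * (1+K)) ≤ A * (1 + K^m)) :
    ∃ η : ℕ → ℝ, (∀ n < m+1, 0 ≤ η n ∧ η n ≤ 1) ∧ η (m + 1 - 1) = 1 ∧
      shiftObj K M A (m+1) η
        = (K^m*A + M * ∑ i ∈ Finset.range m, K^i)^2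
            / (∑ i ∈ Finset.range (m+1), (K^2)^i) := by
  have hKne : K ≠ 1 := ne_of_lt hK1
  have hK1' : 0 < 1 - K := by linarith
  have hKsq : K^2 < 1 := by nlinarith
  have hKsqne : (K:ℝ)^2 ≠ 1 := ne_of_lt hKsq
  have hpm : ∀ j : ℕ, 0 < K^j := fun j => pow_pos hK0 j
  have hpm1 : ∀ j : ℕ, K^j ≤ 1 := fun j => pow_le_one₀ hK0.le hK1.le
  set G := ∑ i ∈ Finset.range m, K^i with hGdef
  set W := ∑ i ∈ Finset.range (m+1), (K^2)^i with hWdef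
  set T := K^m*A + M * G with hTdef
  have hG : G = (1 - K^m)/(1-K) := geom_closed hKne m
  have hW : W = (1 - K^2*(K^m)^2)/(1-K^2) := by
    rw [hWdef, geom_closed hKsqne (m+1), pow_succ, pow_swap]
    ring_nf
  have hsqm : (K^m)^2 ≤ 1 := pow_le_one₀ (hpm m).le (hpm1 m)
  have hWnum : 0 < 1 - K^2*(K^m)^2 := by nlinarith [sq_nonneg K, hsqm]
  have hWpos : 0 < W := by
    rw [hW]; exact div_pos hWnum (by linarith)
  have hT0 : 0 ≤ T := by
    have hG0 : 0 ≤ G := Finset.sum_nonneg fun i _ => pow_nonneg hK0.le i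
    have := (hpm m).le
    positivity
  set c := T / W with hcdef
  have hc0 : 0 ≤ c := div_nonneg hT0 hWpos.le
  set x : ℕ → ℝ := fun j => c * K^(m-j) with hxdef
  -- closed form for aseq j - x j
  have hax : ∀ j ≤ m, aseq K M A x j - x j
      = K^j*A + M*((1-K^j)/(1-K))
        - c * (K^(m-j) * ((1-K^2*(K^j)^2)/(1-K^2))) := by
    intro j hj
    rw [aseq_eq]
    have hs : ∑ i ∈ Finset.range j, K^(j-i) * x i
        = c * K^(m-j) * (K^2 * ∑ i ∈ Finset.range j, (K^2)^i) := by
      rw [← Finset.sum_range_reflect (fun i => (K^2)^i) j, Finset.mul_sum, Finset.mul_sum]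
      refine Finset.sum_congr rfl fun i hi => ?_
      rw [Finset.mem_range] at hi
      have hexp : K^(j-i) * K^(m-i) = K^(m-j) * (K^2 * K^(2*(j-1-i))) := by
        rw [← pow_add, ← pow_add, ← pow_add]
        congr 1
        omega
      calc K^(j-i) * x i = c * (K^(j-i) * K^(m-i)) := by rw [hxdef]; ring
        _ = c * (K^(m-j) * (K^2 * K^(2*(j-1-i)))) := by rw [hexp]
        _ = c * K^(m-j) * (K^2 * (K^2)^(j-1-i)) := by rw [pow_mul]; ring
    rw [hs, geom_closed hKne j]
    have hgeosq : K^2 * ∑ i ∈ Finset.range j, (K^2)^i = (1-K^2*(K^j)^2)/(1-K^2) - 1 := by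
      rw [geom_closed hKsqne j, pow_swap]
      have h2 : (1:ℝ) - K^2 ≠ 0 := by linarith
      field_simp
      ring
    rw [hgeosq]
    ring
  -- nonnegativity: x j ≤ aseq j for j ≤ m
  have hineq : ∀ j ≤ m, x j ≤ aseq K M A x j := by
    intro j hj
    rw [← sub_nonneg, hax j hj]
    have huv : K^j * K^(m-j) = K^m := by rw [← pow_add]; congr 1; omega
    have hu0 : 0 < K^j := hpm j
    have hv0 : 0 < K^(m-j) := hpm (m-j)
    have hu1 : K^j ≤ 1 := hpm1 j
    have hv1 : K^(m-j) ≤ 1 := hpm1 (m-j)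
    have hsqu : (K^j)^2 ≤ 1 := pow_le_one₀ hu0.le hu1
    have hsqv : (K^(m-j))^2 ≤ 1 := pow_le_one₀ hv0.le hv1
    have hKuv : 0 < 1 - K^2*(K^j)^2*(K^(m-j))^2 := by
      nlinarith [sq_nonneg K, sq_nonneg (K^j), mul_le_one₀ hsqu (sq_nonneg (K^(m-j))) hsqv]
    have hTuv : T = K^j*K^(m-j)*A + M*((1-K^j*K^(m-j))/(1-K)) := by
      rw [hTdef, hG, huv]
    have hWuv : W = (1-K^2*(K^j)^2*(K^(m-j))^2/1)/(1-K^2) := by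
      rw [hW, ← huv]; ring_nf
    have hK2ne : (1:ℝ) - K^2 ≠ 0 := by linarith
    have key := key_ident K (K^j) (K^(m-j)) A M (by linarith) hK2ne (by linarith)
    rw [← hTuv] at key
    have hWuv' : ((1:ℝ)-K^2*(K^j)^2*(K^(m-j))^2)/(1-K^2) = W := by rw [hWuv]; ring_nf
    rw [hWuv', ← hcdef] at key
    have hthuv : 0 ≤ A*(1+K^j*K^(m-j)) - M*(K^j*K^(m-j))*(1+K) := by
      rw [huv]; nlinarith
    have t1 : 0 ≤ K^j*(1-(K^(m-j))^2)*(1-K) :=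
      mul_nonneg (mul_nonneg hu0.le (by linarith)) hK1'.le
    have t2 : 0 ≤ M*(1-K^(m-j))*(1-K^j)*(1-K^2*(K^j)^2*(K^(m-j))^2) := by
      apply mul_nonneg (mul_nonneg (mul_nonneg hM (by linarith)) (by linarith))
      linarith
    have hRHS : 0 ≤ K^j*(1-(K^(m-j))^2)*(1-K)*(A*(1+K^j*K^(m-j)) - M*(K^j*K^(m-j))*(1+K))
          + M*(1-K^(m-j))*(1-K^j)*(1-K^2*(K^j)^2*(K^(m-j))^2) := by
      have := mul_nonneg t1 hthuv
      linarith
    rw [← key] at hRHS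
    have hCpos : 0 < (1-K)*(1+K^j*K^(m-j))*(1-K^2*(K^j)^2*(K^(m-j))^2) := by
      apply mul_pos (mul_pos hK1' (by nlinarith)) hKuv
    by_contra hcon
    push_neg at hcon
    nlinarith [mul_pos hCpos (neg_pos.2 hcon)]
  -- x j ≥ 0
  have hx0 : ∀ j, 0 ≤ x j := fun j => mul_nonneg hc0 (pow_nonneg hK0.le _)
  -- last equality
  have hlast : x m = aseq K M A x m := by
    have h := hax m le_rfl
    rw [Nat.sub_self, pow_zero] at h
    have e1 : K^m*A + M*((1-K^m)/(1-K)) = T := by rw [hTdef, hG]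
    have e2 : c * ((1:ℝ) * ((1-K^2*(K^m)^2)/(1-K^2))) = T := by
      rw [hcdef, hW]
      field_simp
    rw [e1, e2, sub_self] at h
    linarith
  -- assemble
  obtain ⟨η, hfeas, hηlast, hobj⟩ := exists_eta K M A (m+1) (by omega) x
    (fun j hj => ⟨hx0 j, hineq j (by omega)⟩)
    (by simpa using hlast)
  refine ⟨η, hfeas, hηlast, ?_⟩
  rw [hobj]
  have hsum : ∑ j ∈ Finset.range (m+1), (x j)^2 = c^2 * W := by
    rw [hWdef, ← sum_w_sq K m, Finset.mul_sum]
    exact Finset.sum_congr rfl fun j _ => by rw [hxdef]; ring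
  rw [hsum, hcdef, sq_div_mul T W (ne_of_gt hWpos)]

end ShiftProof

namespace ShiftProof

lemma nonneg_of_eq_mul (C X R : ℝ) (hC : 0 < C) (h : X * C = R) (hR : 0 ≤ R) : 0 ≤ X := by
  have h2 := div_nonneg hR hC.le
  rwa [← h, mul_div_cancel_right₀ _ (ne_of_gt hC)] at h2

lemma quad_lower (D T W1 A x0 : ℝ) (hW1pos : 0 < W1) (hx00 : 0 ≤ x0) (hx0A : x0 ≤ A)
    (hD0 : 0 < D) (hAW : A*(W1 + D^2) ≤ D*T) :
    (T-D*A)^2 - (T-D*x0)^2 ≤ (x0^2 - A^2)*W1 := by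
  have hWD : 0 ≤ W1 + D^2 := by positivity
  have e1 : (x0+A)*(W1+D^2) ≤ 2*A*(W1+D^2) := by
    apply mul_le_mul_of_nonneg_right (by linarith) hWD
  have h2 : 0 ≤ 2*D*T - (x0+A)*(W1+D^2) := by linarith [e1, hAW]
  have hkey : 0 ≤ (A - x0)*(2*D*T - (x0+A)*(W1+D^2)) := mul_nonneg (by linarith) h2
  nlinarith [hkey]

lemma bound_chain (K D A M T T' W1 W2 : ℝ)
    (hK0 : 0 < K) (hK1 : K < 1) (hKsq' : 0 < 1-K^2) (hA : 0 ≤ A) (hM : 0 ≤ M)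
    (hD0 : 0 < D) (hDK : D ≤ K)
    (hW1 : W1 = (1-D^2)/(1-K^2)) (hW2 : W2 = (1-K^2*D^2)/(1-K^2))
    (hW1pos : 0 < W1) (hW2pos : 0 < W2)
    (hTdef : T = D*A + T') (hT'0 : 0 ≤ T') (hT0 : 0 ≤ T) (hT'T : T' ≤ T)
    (hAW1 : A*W1 ≤ D*T') :
    A^2 + T'^2/W1 ≤ 2*(T^2/W2) := by
  have s1 : A^2*W1 + T'^2 ≤ T'*T := by
    have hh := mul_le_mul_of_nonneg_left hAW1 hA
    have ht : T'*T = T'*(D*A) + T'^2 := by rw [hTdef]; ring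
    nlinarith [hh, ht]
  have s2 : A^2 + T'^2/W1 ≤ T'*T/W1 := by
    have e : T'*T/W1 - (A^2 + T'^2/W1) = (T'*T - (A^2*W1 + T'^2))/W1 := by
      field_simp
    have h0 : 0 ≤ (T'*T - (A^2*W1 + T'^2))/W1 := div_nonneg (by linarith) hW1pos.le
    linarith [e ▸ h0]
  have s3 : T'*T/W1 ≤ T^2/W1 := by
    rw [div_le_div_iff₀ hW1pos hW1pos]
    nlinarith [mul_le_mul_of_nonneg_right (mul_le_mul_of_nonneg_right hT'T hT0) hW1pos.le]
  have hD2K2 : D^2 ≤ K^2 := by nlinarith [mul_le_mul hDK hDK hD0.le hK0.le]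
  have h2K : (0:ℝ) ≤ 2 - K^2 := by nlinarith
  have hX : 1-K^2*D^2 ≤ 2*(1-D^2) := by
    nlinarith [mul_nonneg (sub_nonneg.2 hD2K2) h2K, sq_nonneg (1-K^2)]
  have hW2le : W2 ≤ 2*W1 := by
    rw [hW1, hW2, show (2:ℝ)*((1-D^2)/(1-K^2)) = (2*(1-D^2))/(1-K^2) by ring]
    gcongr
  have s4 : T^2/W1 ≤ 2*(T^2/W2) := by
    rw [show (2:ℝ)*(T^2/W2) = (2*T^2)/W2 by ring, div_le_div_iff₀ hW1pos hW2pos]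
    nlinarith [mul_nonneg (sq_nonneg T) (sub_nonneg.2 hW2le)]
  linarith [s1, s2, s3, s4]


lemma Sval_eq_of (K M A : ℝ) (N : ℕ) (val : ℝ)
    (hub : ∃ η : ℕ → ℝ, (∀ n < N, 0 ≤ η n ∧ η n ≤ 1) ∧ η (N - 1) = 1 ∧
      shiftObj K M A N η = val)
    (hlb : ∀ η : ℕ → ℝ, (∀ n < N, 0 ≤ η n ∧ η n ≤ 1) → η (N - 1) = 1 →
      val ≤ shiftObj K M A N η) :
    Sval K M A N = val := by
  obtain ⟨η₀, h1, h2, h3⟩ := hub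
  have hmem : val ∈ {s : ℝ | ∃ η : ℕ → ℝ, (∀ n < N, 0 ≤ η n ∧ η n ≤ 1) ∧ η (N - 1) = 1 ∧
      s = shiftObj K M A N η} := ⟨η₀, h1, h2, h3.symm⟩
  refine le_antisymm (csInf_le ⟨val, ?_⟩ hmem) (le_csInf ⟨val, hmem⟩ ?_)
  · rintro s ⟨η, a, b, rfl⟩
    exact hlb η a b
  · rintro s ⟨η, a, b, rfl⟩
    exact hlb η a b

lemma Sval_one (K M A : ℝ) : Sval K M A 1 = A^2 := by
  apply Sval_eq_of
  · refine ⟨fun _ => 1, fun n _ => ⟨zero_le_one, le_refl 1⟩, rfl, ?_⟩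
    simp [shiftObj, shiftA]
  · intro η hfeas hlast
    have : shiftObj K M A 1 η = (η 0)^2 * A^2 := by
      simp [shiftObj, shiftA]
    rw [this]
    simp only [Nat.sub_self] at hlast
    rw [hlast]
    norm_num

end ShiftProof

open ShiftProof in
set_option maxHeartbeats 1600000 in
theorem statement_10 (N : ℕ) (hN : 2 ≤ N) (K M A : ℝ)
    (hK0 : 0 < K) (hK1 : K < 1) (hM : 0 ≤ M) (hA : 0 ≤ A) :
    Sval K M A 1 = A ^ 2 ∧
    (Sval K M A N =
      if M * (K ^ (N - 1) * (1 + K) / (1 + K ^ (N - 1))) ≤ A then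
        (1 - K ^ 2) / (1 - K ^ (2 * N)) *
          (K ^ (N - 1) * A + M * (1 - K ^ (N - 1)) / (1 - K)) ^ 2
      else
        A ^ 2 + M ^ 2 * ((1 - K ^ (N - 1)) ^ 2 * (1 - K ^ 2) /
          ((1 - K ^ (2 * N - 2)) * (1 - K) ^ 2))) ∧
    Sval K M A N ≤ 2 * (1 - K ^ 2) / (1 - K ^ (2 * N)) *
      (K ^ (N - 1) * A + M * (1 - K ^ (N - 1)) / (1 - K)) ^ 2 := by
  obtain ⟨m, rfl⟩ : ∃ m, N = m + 2 := ⟨N - 2, by omega⟩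
  have hKne : K ≠ 1 := ne_of_lt hK1
  have hK1' : 0 < 1 - K := by linarith
  have hKsq : K^2 < 1 := by nlinarith
  have hKsqne : (K:ℝ)^2 ≠ 1 := ne_of_lt hKsq
  have hKsq' : 0 < 1 - K^2 := by linarith
  have hpm : ∀ j : ℕ, 0 < K^j := fun j => pow_pos hK0 j
  have hpm1 : ∀ j : ℕ, K^j ≤ 1 := fun j => pow_le_one₀ hK0.le hK1.le
  set D := K^(m+1) with hDdef
  set G1 := ∑ i ∈ Finset.range (m+1), K^i with hG1def
  set W1 := ∑ i ∈ Finset.range (m+1), (K^2)^i with hW1def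
  set W2 := ∑ i ∈ Finset.range (m+2), (K^2)^i with hW2def
  set T := D*A + M*G1 with hTdef
  set T' := M*G1 with hT'def
  have hG1 : G1 = (1-D)/(1-K) := geom_closed hKne (m+1)
  have hW1 : W1 = (1-D^2)/(1-K^2) := by
    rw [hW1def, geom_closed hKsqne (m+1), pow_swap]
  have hW2 : W2 = (1-K^2*D^2)/(1-K^2) := by
    rw [hW2def, geom_closed hKsqne (m+2), pow_succ, pow_swap]
    ring_nf
    rw [hDdef]; ring
  have hD0 : 0 < D := hpm (m+1)
  have hD1 : D ≤ 1 := hpm1 (m+1)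
  have hDK : D ≤ K := by
    rw [hDdef, pow_succ]
    nlinarith [hpm1 m, hpm m]
  have hDsq : D^2 ≤ 1 := pow_le_one₀ hD0.le hD1
  have hnum24 : 0 < 1 - K^2*D^2 := by nlinarith [sq_nonneg (K*D)]
  have hnum22 : 0 < 1 - D^2 := by nlinarith
  have hW1pos : 0 < W1 := by rw [hW1]; exact div_pos hnum22 hKsq'
  have hW2pos : 0 < W2 := by rw [hW2]; exact div_pos hnum24 hKsq'
  have hG10 : 0 ≤ G1 := Finset.sum_nonneg fun i _ => (hpm i).le
  have hT'0 : 0 ≤ T' := mul_nonneg hM hG10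
  have hT0 : 0 ≤ T := by
    have := mul_nonneg hD0.le hA
    rw [hTdef]; linarith
  have hT'T : T' ≤ T := by
    have := mul_nonneg hD0.le hA
    rw [hTdef, hT'def]; linarith
  have hidx1 : m + 2 - 1 = m + 1 := rfl
  have hidx2 : 2 * (m + 2) - 2 = 2*m+2 := by omega
  have hidx3 : 2 * (m + 2) = 2*m+4 := by omega
  have hp22 : K^(2*m+2) = D^2 := by rw [hDdef, ← pow_mul]; congr 1; omega
  have hp24 : K^(2*m+4) = K^2*D^2 := by rw [hDdef, ← pow_mul, ← pow_add]; congr 1; omega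
  have hinner : K^(m+1)*A + M*(1-K^(m+1))/(1-K) = T := by
    rw [hTdef, hT'def, hG1, hDdef, mul_div_assoc]
  have hDpos : (0:ℝ) < 1 + K^(m+1) := by positivity
  have hbound_eq : 2 * (1 - K^2) / (1 - K^(2*(m+2))) *
      (K^(m+1) * A + M * (1 - K^(m+1)) / (1 - K))^2 = 2*(T^2/W2) := by
    rw [hidx3, hp24, hinner, hW2]
    field_simp
  refine ⟨Sval_one K M A, ?_⟩
  by_cases hth : M * (K ^ (m + 2 - 1) * (1 + K) / (1 + K ^ (m + 2 - 1))) ≤ A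
  · -- interior case
    rw [hidx1] at hth
    have hth' : M * (K^(m+1) * (1+K)) ≤ A * (1 + K^(m+1)) := by
      rw [← mul_div_assoc] at hth
      exact (div_le_iff₀ hDpos).1 hth
    have heq : Sval K M A (m+2) = T^2/W2 := by
      apply Sval_eq_of
      · obtain ⟨η, h1, h2, h3⟩ := exists_eta_opt K M A hK0 hK1 hM hA (m+1) hth'
        rw [(by omega : m+1+1 = m+2), ← hG1def, ← hW2def, ← hDdef, ← hTdef] at h3
        exact ⟨η, h1, h2, h3⟩
      · intro η hfeas hlast
        have hcs := obj_lower K M A (m+1) η hlast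
        rw [(by omega : m+1+1 = m+2), ← hG1def, ← hW2def, ← hDdef, ← hTdef] at hcs
        rw [div_le_iff₀ hW2pos]
        linarith [hcs]
    constructor
    · rw [if_pos (by rw [hidx1]; exact hth), heq, hidx1, hidx3, hp24, hinner, hW2]
      field_simp
    · rw [hidx1, heq, hbound_eq]
      have : 0 ≤ T^2/W2 := div_nonneg (sq_nonneg T) hW2pos.le
      linarith
  · -- boundary case
    rw [hidx1] at hth
    have hth' : A * (1 + K^(m+1)) ≤ M * (K^(m+1) * (1+K)) := by
      push_neg at hth
      rw [← mul_div_assoc] at hth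
      have := (lt_div_iff₀ hDpos).1 hth
      linarith
    have hAW1 : A*W1 ≤ D*T' := by
      have key2 : (D*(M*((1-D)/(1-K))) - A*((1-D^2)/(1-K^2))) * (1-K^2)
          = (1-D)*(M*(D*(1+K)) - A*(1+D)) := by
        field_simp
        ring
      have hr : 0 ≤ (1-D)*(M*(D*(1+K)) - A*(1+D)) := by
        apply mul_nonneg (by linarith)
        rw [hDdef]; linarith [hth']
      rw [hW1, hT'def, hG1]
      have := nonneg_of_eq_mul (1-K^2) _ _ hKsq' key2 hr
      linarith
    have hAW2 : A*W2 ≤ D*T := by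
      have key : (D*(D*A + M*((1-D)/(1-K))) - A*((1-K^2*D^2)/(1-K^2))) * (1-K^2)
          = (1-D)*(M*(D*(1+K)) - A*(1+D)) := by
        field_simp
        ring
      have hr : 0 ≤ (1-D)*(M*(D*(1+K)) - A*(1+D)) := by
        apply mul_nonneg (by linarith)
        rw [hDdef]; linarith [hth']
      rw [hW2, hTdef, hT'def, hG1]
      have := nonneg_of_eq_mul (1-K^2) _ _ hKsq' key hr
      linarith
    have hW2s : W2 = W1 + D^2 := by
      rw [hW1, hW2]
      field_simp
      ring
    have heq : Sval K M A (m+2) = A^2 + T'^2/W1 := by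
      apply Sval_eq_of
      · -- witness: η 0 = 1 followed by optimal witness for (m+1, M)
        have hthM : M * (K^m * (1+K)) ≤ M * (1 + K^m) := by
          have h1 : M*(K^m*K) ≤ M*1 := by
            apply mul_le_mul_of_nonneg_left _ hM
            calc K^m*K = K^(m+1) := (pow_succ K m).symm
              _ ≤ 1 := hpm1 (m+1)
          nlinarith [mul_nonneg hM (hpm m).le]
        obtain ⟨η1, hf1, hl1, ho1⟩ := exists_eta_opt K M M hK0 hK1 hM hM m hthM
        set η : ℕ → ℝ := fun n => if n = 0 then 1 else η1 (n-1) with hηdef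
        have hη0 : η 0 = 1 := by simp [hηdef]
        refine ⟨η, ?_, ?_, ?_⟩
        · intro n hn
          by_cases h0 : n = 0
          · simp [hηdef, h0]
          · simp only [hηdef, h0, if_false]
            exact hf1 (n-1) (by omega)
        · show η (m+1) = 1
          simp only [hηdef, Nat.add_eq_zero, and_false, if_false]
          simpa using hl1
        · rw [show m+2 = (m+1)+1 from rfl, shiftObj_succ]
          have hfun : (fun i => η (i+1)) = η1 := by
            funext i
            simp [hηdef]
          rw [hη0, show K*(1-(1:ℝ))*A + M = M by ring, hfun, ho1]
          have hTm : K^m*M + M*∑ i ∈ Finset.range m, K^i = T' := by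
            rw [hT'def, hG1def, Finset.sum_range_succ]
            ring
          rw [hTm, ← hW1def]
          norm_num
      · -- lower bound
        intro η hfeas hlast
        have hlast' : η (m+1) = 1 := hlast
        set x0 := η 0 * A with hx0def
        have hfeas0 := hfeas 0 (by omega)
        have hx00 : 0 ≤ x0 := mul_nonneg hfeas0.1 hA
        have hx0A : x0 ≤ A := by nlinarith [hfeas0.2, hA]
        have hsplit := shiftObj_succ K M A η (m+1)
        have hobj' := obj_lower K M (K*(1-η 0)*A+M) m (fun i => η (i+1))
          (show η (m+1) = 1 from hlast')
        rw [← hW1def] at hobj'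
        have hTsub : K^m*(K*(1-η 0)*A+M) + M*∑ i ∈ Finset.range m, K^i = T - D*x0 := by
          rw [hTdef, hT'def, hG1def, Finset.sum_range_succ, hDdef, hx0def, pow_succ]
          ring
        rw [hTsub] at hobj'
        have hAW' : A*(W1+D^2) ≤ D*T := by rw [← hW2s]; exact hAW2
        have hquad := quad_lower D T W1 A x0 hW1pos hx00 hx0A hD0 hAW'
        have hTeq : T - D*A = T' := by rw [hTdef]; ring
        have hineq2 : (T'^2 - (T-D*x0)^2)/W1 ≤ x0^2 - A^2 := by
          rw [div_le_iff₀ hW1pos, ← hTeq]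
          linarith [hquad]
        rw [sub_div] at hineq2
        have hobj'' : (T-D*x0)^2/W1 ≤ shiftObj K M (K*(1-η 0)*A+M) (m+1) (fun i => η (i+1)) := by
          rw [div_le_iff₀ hW1pos]
          linarith [hobj']
        have hx0sq : (η 0)^2 * A^2 = x0^2 := by rw [hx0def]; ring
        rw [show m+2 = (m+1)+1 from rfl, hsplit, hx0sq]
        linarith [hineq2, hobj'']
    constructor
    · rw [if_neg (by rw [hidx1]; exact hth), heq, hidx1, hidx2, hp22]
      congr 1
      rw [hT'def, hG1, hW1]
      rw [hDdef]
      field_simp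
    · rw [hidx1, heq, hbound_eq]
      exact bound_chain K D A M T T' W1 W2 hK0 hK1 hKsq' hA hM hD0 hDK hW1 hW2
        hW1pos hW2pos hTdef hT'0 hT0 hT'T hAW1
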